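/- Let (M,ρ,μ) satisfy property (I), and let I_M = lim_{t→0⁺} C_t where C_t is the supremum of constants C such that μ(A_κ) ≥ C·κ·μ(A) for all bounded open A and all κ ∈ (0,t]. Then for every bounded open set A and every t > 0, μ(A_t) ≥ (1 − e^{−I_M·t})·μ(A). -/

import Mathlib

open MeasureTheory Metric Set


lemma aux_per_c {M : Type*} [MetricSpace M] [MeasurableSpace M] [BorelSpace M]
    (μ : Measure M) (A : Set M) (hAo : IsOpen A) (hAb : Bornology.IsBounded A)
    (hAc : Aᶜ.Nonempty) (hμA : μ A < ⊤)
    (c u : ℝ) (hu : 0 < u)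
    (hc : ∀ B : Set M, IsOpen B → Bornology.IsBounded B →
      ∀ κ : ℝ, 0 < κ → κ ≤ u →
        ENNReal.ofReal (c * κ) * μ B ≤ μ {x | x ∈ B ∧ infDist x Bᶜ ≤ κ})
    (t : ℝ) (ht : 0 < t) :
    (1 - Real.exp (-(c*t))) * (μ A).toReal ≤ (μ {x | x ∈ A ∧ infDist x Aᶜ ≤ t}).toReal := by
  set f : M → ℝ := fun x => infDist x Aᶜ with hf
  have hfcont : Continuous f := continuous_infDist_pt _
  set As : ℝ → Set M := fun s => {x | s < f x} with hAs
  have hAsA : ∀ s : ℝ, 0 ≤ s → As s ⊆ A := by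
    intro s hs x hx
    by_contra hxA
    have : f x = 0 := infDist_zero_of_mem hxA
    simp only [hAs, mem_setOf_eq, this] at hx
    linarith
  have hA0 : As 0 = A := by
    apply Subset.antisymm (hAsA 0 le_rfl)
    intro x hx
    exact (hAo.isClosed_compl.notMem_iff_infDist_pos hAc).1 (by simpa using hx)
  have hAsOpen : ∀ s : ℝ, IsOpen (As s) := fun s =>
    isOpen_lt continuous_const hfcont
  have hAsBd : ∀ s : ℝ, 0 ≤ s → Bornology.IsBounded (As s) := fun s hs =>
    hAb.subset (hAsA s hs)
  have hfin : ∀ s : Set M, s ⊆ A → μ s < ⊤ := fun s hs => lt_of_le_of_lt (measure_mono hs) hμA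
  set g : ℝ → ℝ := fun s => (μ (As s)).toReal with hg
  -- key decomposition
  have hdecomp : ∀ s a : ℝ, 0 ≤ s → s < a →
      g s = g a + (μ (As s ∩ {x | f x ≤ a})).toReal := by
    intro s a hs hsa
    have hT : MeasurableSet {x | f x ≤ a} := (isClosed_le hfcont continuous_const).measurableSet
    have h1 : μ (As s ∩ {x | f x ≤ a}) + μ (As s \ {x | f x ≤ a}) = μ (As s) :=
      measure_inter_add_diff _ hT
    have h2 : As s \ {x | f x ≤ a} = As a := by
      ext x
      simp only [hAs, mem_diff, mem_setOf_eq, not_le]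
      constructor
      · rintro ⟨_, h⟩; exact h
      · intro h; exact ⟨lt_trans hsa h, h⟩
    rw [h2] at h1
    have hfin1 : μ (As a) ≠ ⊤ := (hfin _ (hAsA a (le_trans hs hsa.le))).ne
    have hfin2 : μ (As s ∩ {x | f x ≤ a}) ≠ ⊤ :=
      (hfin _ (fun x hx => hAsA s hs hx.1)).ne
    show (μ (As s)).toReal = (μ (As a)).toReal + (μ (As s ∩ {x | f x ≤ a})).toReal
    rw [← h1, ENNReal.toReal_add hfin2 hfin1]
    ring
  -- step inequality
  have hstep : ∀ s κ : ℝ, 0 ≤ s → 0 < κ → κ ≤ u → g (s + κ) ≤ (1 - c * κ) * g s := by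
    intro s κ hs hκ hκu
    have hBc : (As s)ᶜ.Nonempty := hAc.mono (compl_subset_compl.2 (hAsA s hs))
    have hsub : {x | x ∈ As s ∧ infDist x (As s)ᶜ ≤ κ} ⊆ As s ∩ {x | f x ≤ s + κ} := by
      intro x ⟨hx1, hx2⟩
      refine ⟨hx1, ?_⟩
      by_contra hgt
      simp only [mem_setOf_eq, not_le] at hgt
      have hlt : infDist x (As s)ᶜ < f x - s := by
        have : (0:ℝ) < κ := hκ
        linarith
      obtain ⟨y, hy, hdy⟩ := (infDist_lt_iff hBc).1 hlt
      have hyf : f y ≤ s := by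
        simp only [hAs, mem_compl_iff, mem_setOf_eq, not_lt] at hy; exact hy
      have hlip := infDist_le_infDist_add_dist (x := x) (y := y) (s := Aᶜ)
      change f x ≤ f y + dist x y at hlip
      linarith
    have hmeas := hc (As s) (hAsOpen s) (hAsBd s hs) κ hκ hκu
    have hle : ENNReal.ofReal (c * κ) * μ (As s) ≤ μ (As s ∩ {x | f x ≤ s + κ}) :=
      le_trans hmeas (measure_mono hsub)
    have hdec := hdecomp s (s + κ) hs (by linarith)
    have hck : c * κ * g s ≤ (μ (As s ∩ {x | f x ≤ s + κ})).toReal := by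
      rcases le_or_gt (c * κ) 0 with h | h
      · have : 0 ≤ (μ (As s ∩ {x | f x ≤ s + κ})).toReal := ENNReal.toReal_nonneg
        nlinarith [ENNReal.toReal_nonneg (a := μ (As s))]
      · have hfin2 : μ (As s ∩ {x | f x ≤ s + κ}) ≠ ⊤ :=
          (hfin _ (fun x hx => hAsA s hs hx.1)).ne
        have := ENNReal.toReal_mono hfin2 hle
        rwa [ENNReal.toReal_mul, ENNReal.toReal_ofReal h.le] at this
    rw [hg] at hdec ⊢
    nlinarith
  -- iteration
  have hiter : ∀ (κ : ℝ), 0 < κ → κ ≤ u → 0 ≤ 1 - c * κ →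
      ∀ n : ℕ, g (n * κ) ≤ (1 - c * κ) ^ n * g 0 := by
    intro κ hκ hκu hnn n
    induction n with
    | zero => simp
    | succ n ih =>
      have h1 : g ((n + 1 : ℕ) * κ) ≤ (1 - c * κ) * g (n * κ) := by
        have := hstep (n * κ) κ (by positivity) hκ hκu
        have heq : (n : ℝ) * κ + κ = ((n + 1 : ℕ) : ℝ) * κ := by push_cast; ring
        rwa [heq] at this
      calc g ((n + 1 : ℕ) * κ) ≤ (1 - c * κ) * g (n * κ) := h1
        _ ≤ (1 - c * κ) * ((1 - c * κ) ^ n * g 0) := by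
            exact mul_le_mul_of_nonneg_left ih hnn
        _ = (1 - c * κ) ^ (n + 1) * g 0 := by ring
  -- choose n
  obtain ⟨n, hn1, hn2⟩ : ∃ n : ℕ, t / u ≤ n ∧ c * t ≤ n := by
    obtain ⟨n, hn⟩ := exists_nat_ge (max (t / u) (c * t))
    exact ⟨n, (le_max_left _ _).trans hn, (le_max_right _ _).trans hn⟩
  have hnpos : 0 < (n : ℝ) := lt_of_lt_of_le (div_pos ht hu) hn1
  set κ := t / n with hκdef
  have hκpos : 0 < κ := div_pos ht hnpos
  have hκu : κ ≤ u := by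
    rw [hκdef, div_le_iff₀ hnpos]
    have := (div_le_iff₀ hu).1 hn1
    nlinarith
  have hcκ : c * κ ≤ 1 := by
    rw [hκdef, ← mul_div_assoc, div_le_one hnpos]
    linarith [hn2]
  have hnn : 0 ≤ 1 - c * κ := by linarith
  have hgt : g t ≤ Real.exp (-(c * t)) * g 0 := by
    have h1 := hiter κ hκpos hκu hnn n
    have hnκ : (n : ℝ) * κ = t := by
      rw [hκdef]; field_simp [hnpos.ne']
    rw [hnκ] at h1
    have h2 : (1 - c * κ) ^ n ≤ Real.exp (-(c * κ)) ^ n := by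
      apply pow_le_pow_left₀ hnn
      linarith [Real.add_one_le_exp (-(c * κ))]
    have h3 : Real.exp (-(c * κ)) ^ n = Real.exp (-(c * t)) := by
      rw [← Real.exp_nat_mul]
      congr 1
      rw [hκdef]
      field_simp
    calc g t ≤ (1 - c * κ) ^ n * g 0 := h1
      _ ≤ Real.exp (-(c * κ)) ^ n * g 0 := mul_le_mul_of_nonneg_right h2 ENNReal.toReal_nonneg
      _ = Real.exp (-(c * t)) * g 0 := by rw [h3]
  -- conclude
  have hdec := hdecomp 0 t le_rfl ht
  have hset : As 0 ∩ {x | f x ≤ t} = {x | x ∈ A ∧ infDist x Aᶜ ≤ t} := by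
    rw [hA0]; rfl
  rw [hset] at hdec
  have hg0 : g 0 = (μ A).toReal := by rw [hg]; simp only [hA0]
  rw [← hg0]
  nlinarith [ENNReal.toReal_nonneg (a := μ {x | x ∈ A ∧ infDist x Aᶜ ≤ t})]

set_option maxHeartbeats 1000000 in
/-- Let `(M,ρ,μ)` satisfy property (I) with constants `κ₀, C`.
Let `I_M = sup_{t ∈ (0,κ₀]} C_t` be the optimal isoperimetric constant, realized here
as the supremum of all constants `c` that work for all `κ ∈ (0,t]` for some `t ∈ (0,κ₀]`.
Then for every bounded open `A` and every `t > 0`,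
`μ(A_t) ≥ (1 − e^{−I_M·t})·μ(A)`, where `A_t = {x ∈ A : dist(x,Aᶜ) ≤ t}`. -/
theorem measure_layer_ge_of_isoperimetric
    {M : Type*} [MetricSpace M] [MeasurableSpace M] [BorelSpace M]
    (μ : Measure M)
    (hpos : μ Set.univ ≠ 0)
    (hballs : ∀ (x : M) (r : ℝ), μ (Metric.ball x r) < ⊤)
    (κ₀ C : ℝ) (hκ₀ : 0 < κ₀) (hC : 0 < C)
    (hI : ∀ A : Set M, IsOpen A → Bornology.IsBounded A →
      ∀ κ : ℝ, 0 < κ → κ ≤ κ₀ →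
        ENNReal.ofReal (C * κ) * μ A ≤ μ {x | x ∈ A ∧ Metric.infDist x Aᶜ ≤ κ}) :
    ∀ A : Set M, IsOpen A → Bornology.IsBounded A → ∀ t : ℝ, 0 < t →
      ENNReal.ofReal
          (1 - Real.exp (-(sSup {c : ℝ | ∃ u : ℝ, 0 < u ∧ u ≤ κ₀ ∧
              ∀ B : Set M, IsOpen B → Bornology.IsBounded B →
                ∀ κ : ℝ, 0 < κ → κ ≤ u →
                  ENNReal.ofReal (c * κ) * μ B ≤
                    μ {x | x ∈ B ∧ Metric.infDist x Bᶜ ≤ κ}} * t))) * μ A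
        ≤ μ {x | x ∈ A ∧ Metric.infDist x Aᶜ ≤ t} := by

  intro A hAo hAb t ht
  set Sset : Set ℝ := {c : ℝ | ∃ u : ℝ, 0 < u ∧ u ≤ κ₀ ∧
    ∀ B : Set M, IsOpen B → Bornology.IsBounded B →
      ∀ κ : ℝ, 0 < κ → κ ≤ u →
        ENNReal.ofReal (c * κ) * μ B ≤ μ {x | x ∈ B ∧ Metric.infDist x Bᶜ ≤ κ}} with hSset
  by_cases hAc : Aᶜ.Nonempty
  · by_cases hbdd : BddAbove Sset
    · -- the interesting case
      have hne : Sset.Nonempty := ⟨C, κ₀, hκ₀, le_rfl, hI⟩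
      obtain ⟨z, hz⟩ := id hAc
      obtain ⟨r, hr⟩ := hAb.subset_closedBall z
      have hμA : μ A < ⊤ := lt_of_le_of_lt
        (measure_mono (hr.trans (closedBall_subset_ball (lt_add_one r)))) (hballs z (r + 1))
      have hμAt : μ {x | x ∈ A ∧ infDist x Aᶜ ≤ t} ≠ ⊤ :=
        (lt_of_le_of_lt (measure_mono (fun x hx => hx.1)) hμA).ne
      -- per-element estimate
      have key : ∀ c ∈ Sset, (1 - Real.exp (-(c * t))) * (μ A).toReal ≤
          (μ {x | x ∈ A ∧ infDist x Aᶜ ≤ t}).toReal := by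
        rintro c ⟨u, hu, _, hc⟩
        exact aux_per_c μ A hAo hAb hAc hμA c u hu hc t ht
      obtain ⟨seq, _, htend, hmem⟩ := exists_seq_tendsto_sSup hne hbdd
      have hlim : Filter.Tendsto
          (fun n => (1 - Real.exp (-(seq n * t))) * (μ A).toReal) Filter.atTop
          (nhds ((1 - Real.exp (-(sSup Sset * t))) * (μ A).toReal)) := by
        have cont : Continuous fun c : ℝ => (1 - Real.exp (-(c * t))) * (μ A).toReal :=
          (continuous_const.sub (Real.continuous_exp.comp
            ((continuous_id.mul continuous_const).neg))).mul continuous_const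
        exact (cont.tendsto _).comp htend
      have hreal : (1 - Real.exp (-(sSup Sset * t))) * (μ A).toReal ≤
          (μ {x | x ∈ A ∧ infDist x Aᶜ ≤ t}).toReal :=
        le_of_tendsto hlim (Filter.Eventually.of_forall fun n => key _ (hmem n))
      set a := 1 - Real.exp (-(sSup Sset * t)) with ha
      rcases le_or_gt a 0 with hA0 | hA0
      · rw [ENNReal.ofReal_eq_zero.2 hA0, zero_mul]
        exact zero_le
      · calc ENNReal.ofReal a * μ A
            = ENNReal.ofReal a * ENNReal.ofReal (μ A).toReal := by
              rw [ENNReal.ofReal_toReal hμA.ne]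
          _ = ENNReal.ofReal (a * (μ A).toReal) := (ENNReal.ofReal_mul hA0.le).symm
          _ ≤ ENNReal.ofReal ((μ {x | x ∈ A ∧ infDist x Aᶜ ≤ t}).toReal) :=
              ENNReal.ofReal_le_ofReal hreal
          _ = μ {x | x ∈ A ∧ infDist x Aᶜ ≤ t} := ENNReal.ofReal_toReal hμAt
    · rw [Real.sSup_of_not_bddAbove hbdd]
      simp
  · -- Aᶜ = ∅
    have hAe : Aᶜ = ∅ := not_nonempty_iff_eq_empty.1 hAc
    have hset : {x | x ∈ A ∧ infDist x Aᶜ ≤ t} = A := by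
      ext x
      simp [hAe, infDist_empty, ht.le]
    rw [hset]
    calc ENNReal.ofReal (1 - Real.exp (-(sSup Sset * t))) * μ A
        ≤ 1 * μ A := by
          gcongr
          exact ENNReal.ofReal_le_one.2 (by linarith [Real.exp_pos (-(sSup Sset * t))])
      _ = μ A := one_mul _
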